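/- Let H be a separable real Hilbert space, μ a Borel probability measure on H, and K ⊆ H a compact set. Assume sup_{x ∈ K} E[1/‖x − X‖] < ∞ and μ is nonatomic. Then the empirical spatial distribution Ŝₙ(x) = (1/n)∑ᵢ u(x − Xᵢ), from i.i.d. X₁, …, Xₙ ∼ μ, converges uniformly over x ∈ K to S(x) = E[u(x − X)] in norm, almost surely: sup_{x∈K} ‖Ŝₙ(x) − S(x)‖ → 0 a.s. -/

import Mathlib

open MeasureTheory ProbabilityTheory Filter

section Aux

variable {H : Type*} [NormedAddCommGroup H] [NormedSpace ℝ H]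

lemma norm_unitvec_le_one (v : H) : ‖‖v‖⁻¹ • v‖ ≤ 1 := by
  rcases eq_or_ne v 0 with rfl | hv
  · simp
  · rw [norm_smul, norm_inv, norm_norm, inv_mul_cancel₀ (norm_ne_zero_iff.2 hv)]

lemma unitvec_lipschitz (v w : H) (hw : w ≠ 0) :
    ‖‖v‖⁻¹ • v - ‖w‖⁻¹ • w‖ ≤ 2 * ‖v - w‖ * ‖w‖⁻¹ := by
  have hw' : (0:ℝ) < ‖w‖ := norm_pos_iff.2 hw
  rcases eq_or_ne v 0 with rfl | hv
  · have : ‖(0:H) - w‖ = ‖w‖ := by simp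
    simp only [norm_zero, inv_zero, zero_smul, zero_sub, norm_neg, norm_smul, norm_inv,
      norm_norm, inv_mul_cancel₀ (norm_ne_zero_iff.2 hw), this]
    rw [mul_assoc, mul_inv_cancel₀ (norm_ne_zero_iff.2 hw)]
    norm_num
  · have hv' : (0:ℝ) < ‖v‖ := norm_pos_iff.2 hv
    have key : ‖v‖⁻¹ • v - ‖w‖⁻¹ • w = ‖w‖⁻¹ • (v - w) + (‖v‖⁻¹ - ‖w‖⁻¹) • v := by
      simp only [smul_sub, sub_smul]; abel
    rw [key]
    have h1 : ‖‖w‖⁻¹ • (v - w)‖ = ‖v - w‖ * ‖w‖⁻¹ := by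
      rw [norm_smul, norm_inv, norm_norm, mul_comm]
    have h2 : ‖(‖v‖⁻¹ - ‖w‖⁻¹) • v‖ ≤ ‖v - w‖ * ‖w‖⁻¹ := by
      rw [norm_smul, Real.norm_eq_abs]
      have : |‖v‖⁻¹ - ‖w‖⁻¹| = |‖w‖ - ‖v‖| * (‖v‖⁻¹ * ‖w‖⁻¹) := by
        rw [← abs_of_pos (show (0:ℝ) < ‖v‖⁻¹ * ‖w‖⁻¹ by positivity), ← abs_mul]
        congr 1
        field_simp
      rw [this]
      have habs : |‖w‖ - ‖v‖| ≤ ‖v - w‖ := by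
        rw [abs_sub_comm]; exact abs_norm_sub_norm_le v w
      calc |‖w‖ - ‖v‖| * (‖v‖⁻¹ * ‖w‖⁻¹) * ‖v‖
          = |‖w‖ - ‖v‖| * ‖w‖⁻¹ * (‖v‖⁻¹ * ‖v‖) := by ring
        _ = |‖w‖ - ‖v‖| * ‖w‖⁻¹ := by
            rw [inv_mul_cancel₀ (ne_of_gt hv'), mul_one]
        _ ≤ ‖v - w‖ * ‖w‖⁻¹ := by
            apply mul_le_mul_of_nonneg_right habs (by positivity)
    calc ‖‖w‖⁻¹ • (v - w) + (‖v‖⁻¹ - ‖w‖⁻¹) • v‖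
        ≤ ‖‖w‖⁻¹ • (v - w)‖ + ‖(‖v‖⁻¹ - ‖w‖⁻¹) • v‖ := norm_add_le _ _
      _ ≤ ‖v - w‖ * ‖w‖⁻¹ + ‖v - w‖ * ‖w‖⁻¹ := by rw [h1]; exact add_le_add le_rfl h2
      _ = 2 * ‖v - w‖ * ‖w‖⁻¹ := by ring

end Aux

/-- Uniform Glivenko–Cantelli over a compact set: if `μ` is nonatomic and
`sup_{x ∈ K} E[1/‖x − X‖] < ∞`, then the empirical spatial distribution converges to
the spatial distribution uniformly over the compact set `K`, almost surely. -/
theorem empirical_spatial_distribution_uniform_compact {Ω : Type*} [MeasureSpace Ω]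
    [IsProbabilityMeasure (ℙ : Measure Ω)]
    {H : Type*} [NormedAddCommGroup H] [InnerProductSpace ℝ H] [CompleteSpace H]
    [MeasurableSpace H] [BorelSpace H] [SecondCountableTopology H]
    (μ : Measure H) [IsProbabilityMeasure μ]
    (hna : ∀ x : H, μ {x} = 0)
    (K : Set H) (hK : IsCompact K)
    (hint : ∀ x ∈ K, Integrable (fun y => ‖x - y‖⁻¹) μ)
    (hbdd : ∃ C : ℝ, ∀ x ∈ K, (∫ y, ‖x - y‖⁻¹ ∂μ) ≤ C)
    (X : ℕ → Ω → H) (hmeas : ∀ i, Measurable (X i))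
    (hindep : iIndepFun X ℙ)
    (hdist : ∀ i, Measure.map (X i) ℙ = μ)
    (S : H → H) (hS : ∀ x, S x = ∫ y, ‖x - y‖⁻¹ • (x - y) ∂μ) :
    ∀ᵐ ω ∂ℙ,
      Tendsto (fun n : ℕ => ⨆ x ∈ K,
          ‖((n : ℝ)⁻¹ • ∑ i ∈ Finset.range n, ‖x - X i ω‖⁻¹ • (x - X i ω)) - S x‖)
        atTop (nhds 0) := by
  classical
  obtain ⟨C, hC⟩ := hbdd
  -- measurability of the kernel maps
  have gmeas : ∀ z : H, Measurable (fun y : H => ‖z - y‖⁻¹ • (z - y)) := fun z =>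
    ((measurable_const.sub measurable_id).norm.inv).smul (measurable_const.sub measurable_id)
  have gsc : ∀ z : H, Measurable (fun y : H => ‖z - y‖⁻¹) := fun z =>
    (measurable_const.sub measurable_id).norm.inv
  -- integrability of the unit-vector kernel (bounded by 1)
  have hInt_f : ∀ z : H, Integrable (fun y => ‖z - y‖⁻¹ • (z - y)) μ := fun z =>
    (integrable_const (1:ℝ)).mono' ((gmeas z).aestronglyMeasurable)
      (Filter.Eventually.of_forall fun y => norm_unitvec_le_one _)
  have ae_ne : ∀ z : H, ∀ᵐ y ∂μ, y ≠ z := by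
    intro z
    rw [ae_iff]
    simp only [ne_eq, not_not, Set.setOf_eq_eq_singleton]
    exact hna z
  -- Lipschitz-type bound for S
  have hS_lip : ∀ (x : H), ∀ z ∈ K, ‖S x - S z‖ ≤ 2 * ‖x - z‖ * ∫ y, ‖z - y‖⁻¹ ∂μ := by
    intro x z hz
    rw [hS x, hS z, ← integral_sub (hInt_f x) (hInt_f z)]
    refine (norm_integral_le_integral_norm _).trans ?_
    have hae : ∀ᵐ y ∂μ, ‖(‖x - y‖⁻¹ • (x - y)) - (‖z - y‖⁻¹ • (z - y))‖
        ≤ 2 * ‖x - z‖ * ‖z - y‖⁻¹ := by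
      filter_upwards [ae_ne z] with y hy
      have h := unitvec_lipschitz (x - y) (z - y) (sub_ne_zero.2 (Ne.symm hy))
      rwa [sub_sub_sub_cancel_right] at h
    calc (∫ y, ‖(‖x - y‖⁻¹ • (x - y)) - (‖z - y‖⁻¹ • (z - y))‖ ∂μ)
        ≤ ∫ y, 2 * ‖x - z‖ * ‖z - y‖⁻¹ ∂μ := by
          refine integral_mono_ae ((hInt_f x).sub (hInt_f z)).norm ?_ hae
          exact (hint z hz).const_mul _
      _ = 2 * ‖x - z‖ * ∫ y, ‖z - y‖⁻¹ ∂μ := by rw [integral_const_mul]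
  -- identical distribution of the samples
  have hident : ∀ i, IdentDistrib (X i) (X 0) ℙ ℙ := fun i =>
    ⟨(hmeas i).aemeasurable, (hmeas 0).aemeasurable, by rw [hdist i, hdist 0]⟩
  -- vector strong law at a point
  have lln_vec : ∀ z ∈ K, ∀ᵐ ω ∂ℙ, Tendsto
      (fun n : ℕ => (n:ℝ)⁻¹ • ∑ i ∈ Finset.range n, ‖z - X i ω‖⁻¹ • (z - X i ω))
      atTop (nhds (S z)) := by
    intro z _
    set Y : ℕ → Ω → H := fun i => (fun y : H => ‖z - y‖⁻¹ • (z - y)) ∘ X i with hY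
    have hYint : Integrable (Y 0) ℙ :=
      (integrable_const (1:ℝ)).mono' (((gmeas z).comp (hmeas 0)).aestronglyMeasurable)
        (Filter.Eventually.of_forall fun ω => norm_unitvec_le_one _)
    have hpair : Pairwise (Function.onFun (fun f g => IndepFun f g ℙ) Y) := fun i j hij =>
      (hindep.indepFun hij).comp (gmeas z) (gmeas z)
    have hid : ∀ i, IdentDistrib (Y i) (Y 0) ℙ ℙ := fun i => (hident i).comp (gmeas z)
    have h := strong_law_ae Y hYint hpair hid
    have hE : (ℙ[Y 0]) = S z := by
      rw [hS z, ← hdist 0,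
        integral_map (hmeas 0).aemeasurable ((gmeas z).aestronglyMeasurable)]
      rfl
    rw [hE] at h
    exact h
  -- scalar strong law at a point
  have lln_sc : ∀ z ∈ K, ∀ᵐ ω ∂ℙ, Tendsto
      (fun n : ℕ => (n:ℝ)⁻¹ • ∑ i ∈ Finset.range n, ‖z - X i ω‖⁻¹)
      atTop (nhds (∫ y, ‖z - y‖⁻¹ ∂μ)) := by
    intro z hz
    set Z : ℕ → Ω → ℝ := fun i => (fun y : H => ‖z - y‖⁻¹) ∘ X i with hZ
    have hZint : Integrable (Z 0) ℙ := by
      have h0 := hint z hz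
      rw [← hdist 0] at h0
      exact (integrable_map_measure ((gsc z).aestronglyMeasurable)
        (hmeas 0).aemeasurable).1 h0
    have hpair : Pairwise (Function.onFun (fun f g => IndepFun f g ℙ) Z) := fun i j hij =>
      (hindep.indepFun hij).comp (gsc z) (gsc z)
    have hid : ∀ i, IdentDistrib (Z i) (Z 0) ℙ ℙ := fun i => (hident i).comp (gsc z)
    have h := strong_law_ae Z hZint hpair hid
    have hE : (ℙ[Z 0]) = ∫ y, ‖z - y‖⁻¹ ∂μ := by
      rw [← hdist 0,
        integral_map (hmeas 0).aemeasurable ((gsc z).aestronglyMeasurable)]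
      rfl
    rw [hE] at h
    exact h
  -- a.s. the samples avoid any fixed point
  have ae_hit : ∀ (i : ℕ) (z : H), ∀ᵐ ω ∂ℙ, X i ω ≠ z := by
    intro i z
    rw [ae_iff]
    simp only [ne_eq, not_not]
    have h1 : {ω | X i ω = z} = X i ⁻¹' {z} := rfl
    rw [h1, ← Measure.map_apply (hmeas i) (measurableSet_singleton z), hdist i]
    exact hna z
  -- handle the empty case
  rcases K.eq_empty_or_nonempty with rfl | ⟨x₀, hx₀⟩
  · refine Filter.Eventually.of_forall fun ω => ?_
    have hz : ∀ n : ℕ, (⨆ x ∈ (∅ : Set H), ‖((n : ℝ)⁻¹ •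
        ∑ i ∈ Finset.range n, ‖x - X i ω‖⁻¹ • (x - X i ω)) - S x‖) = 0 := by
      intro n
      simp [Real.iSup_of_isEmpty]
    simp only [hz]
    exact tendsto_const_nhds
  have hC0 : 0 ≤ C :=
    le_trans (integral_nonneg fun y => by positivity) (hC x₀ hx₀)
  -- key uniform eventual bound for each δ > 0
  have key : ∀ δ : ℝ, 0 < δ → ∀ᵐ ω ∂ℙ, ∀ᶠ n : ℕ in atTop, ∀ x ∈ K,
      ‖((n : ℝ)⁻¹ • ∑ i ∈ Finset.range n, ‖x - X i ω‖⁻¹ • (x - X i ω)) - S x‖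
        ≤ (4 * C + 3) * δ := by
    intro δ hδ
    obtain ⟨t, htK, htfin, htcov⟩ := hK.finite_cover_balls hδ
    have hcount : t.Countable := htfin.countable
    have h1 : ∀ᵐ ω ∂ℙ, ∀ z ∈ t, Tendsto
        (fun n : ℕ => (n:ℝ)⁻¹ • ∑ i ∈ Finset.range n, ‖z - X i ω‖⁻¹ • (z - X i ω))
        atTop (nhds (S z)) :=
      (ae_ball_iff hcount).2 fun z hz => lln_vec z (htK hz)
    have h2 : ∀ᵐ ω ∂ℙ, ∀ z ∈ t, Tendsto
        (fun n : ℕ => (n:ℝ)⁻¹ • ∑ i ∈ Finset.range n, ‖z - X i ω‖⁻¹)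
        atTop (nhds (∫ y, ‖z - y‖⁻¹ ∂μ)) :=
      (ae_ball_iff hcount).2 fun z hz => lln_sc z (htK hz)
    have h3 : ∀ᵐ ω ∂ℙ, ∀ i : ℕ, ∀ z ∈ t, X i ω ≠ z := by
      rw [ae_all_iff]
      exact fun i => (ae_ball_iff hcount).2 fun z _ => ae_hit i z
    filter_upwards [h1, h2, h3] with ω hω1 hω2 hω3
    have hev : ∀ᶠ n : ℕ in atTop, ∀ z ∈ t,
        ‖((n:ℝ)⁻¹ • ∑ i ∈ Finset.range n, ‖z - X i ω‖⁻¹ • (z - X i ω)) - S z‖ ≤ δ ∧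
        ((n:ℝ)⁻¹ • ∑ i ∈ Finset.range n, ‖z - X i ω‖⁻¹) ≤ C + 1 := by
      rw [eventually_all_finite htfin]
      intro z hz
      have e1 : ∀ᶠ n : ℕ in atTop,
          ‖((n:ℝ)⁻¹ • ∑ i ∈ Finset.range n, ‖z - X i ω‖⁻¹ • (z - X i ω)) - S z‖ ≤ δ := by
        have := (hω1 z hz).eventually (Metric.closedBall_mem_nhds (S z) hδ)
        filter_upwards [this] with n hn
        rw [dist_eq_norm] at hn
        exact hn
      have e2 : ∀ᶠ n : ℕ in atTop,
          ((n:ℝ)⁻¹ • ∑ i ∈ Finset.range n, ‖z - X i ω‖⁻¹) ≤ C + 1 := by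
        have hlt : (∫ y, ‖z - y‖⁻¹ ∂μ) < C + 1 :=
          lt_of_le_of_lt (hC z (htK hz)) (by linarith)
        exact ((hω2 z hz).eventually_lt_const hlt).mono fun n hn => le_of_lt hn
      exact e1.and e2
    filter_upwards [hev, eventually_ge_atTop 1] with n hn hn1 x hx
    obtain ⟨z, hzt, hxz⟩ := Set.mem_iUnion₂.1 (htcov hx)
    obtain ⟨hz1, hz2⟩ := hn z hzt
    have hxz' : ‖x - z‖ ≤ δ := by
      rw [← dist_eq_norm]
      exact le_of_lt (Metric.mem_ball.1 hxz)
    have hnn : (0:ℝ) ≤ (n:ℝ)⁻¹ := by positivity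
    -- empirical difference bound
    have hemp : ‖((n:ℝ)⁻¹ • ∑ i ∈ Finset.range n, ‖x - X i ω‖⁻¹ • (x - X i ω)) -
        ((n:ℝ)⁻¹ • ∑ i ∈ Finset.range n, ‖z - X i ω‖⁻¹ • (z - X i ω))‖
          ≤ 2 * δ * (C + 1) := by
      rw [← smul_sub, ← Finset.sum_sub_distrib, norm_smul, norm_inv,
        Real.norm_natCast]
      have hsum : ‖∑ i ∈ Finset.range n,
          ((‖x - X i ω‖⁻¹ • (x - X i ω)) - (‖z - X i ω‖⁻¹ • (z - X i ω)))‖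
            ≤ ∑ i ∈ Finset.range n, 2 * δ * ‖z - X i ω‖⁻¹ := by
        refine (norm_sum_le _ _).trans (Finset.sum_le_sum fun i _ => ?_)
        have h := unitvec_lipschitz (x - X i ω) (z - X i ω)
          (sub_ne_zero.2 fun h' => (hω3 i z hzt) h'.symm)
        rw [sub_sub_sub_cancel_right] at h
        refine h.trans ?_
        have : (0:ℝ) ≤ ‖z - X i ω‖⁻¹ := by positivity
        nlinarith [norm_nonneg (x - z)]
      calc ((n:ℝ))⁻¹ * ‖∑ i ∈ Finset.range n,
            ((‖x - X i ω‖⁻¹ • (x - X i ω)) - (‖z - X i ω‖⁻¹ • (z - X i ω)))‖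
          ≤ (n:ℝ)⁻¹ * ∑ i ∈ Finset.range n, 2 * δ * ‖z - X i ω‖⁻¹ := by
            exact mul_le_mul_of_nonneg_left hsum hnn
        _ = 2 * δ * ((n:ℝ)⁻¹ • ∑ i ∈ Finset.range n, ‖z - X i ω‖⁻¹) := by
            rw [← Finset.mul_sum, smul_eq_mul]
            ring
        _ ≤ 2 * δ * (C + 1) := by
            have h0 : (0:ℝ) ≤ 2 * δ := by positivity
            exact mul_le_mul_of_nonneg_left hz2 h0
    have hSd : ‖S z - S x‖ ≤ 2 * δ * C := by
      rw [norm_sub_rev]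
      refine (hS_lip x z (htK hzt)).trans ?_
      have hI0 : 0 ≤ ∫ y, ‖z - y‖⁻¹ ∂μ := integral_nonneg fun y => by positivity
      have hIC : (∫ y, ‖z - y‖⁻¹ ∂μ) ≤ C := hC z (htK hzt)
      nlinarith [norm_nonneg (x - z)]
    have e : ((n:ℝ)⁻¹ • ∑ i ∈ Finset.range n, ‖x - X i ω‖⁻¹ • (x - X i ω)) - S x =
        (((n:ℝ)⁻¹ • ∑ i ∈ Finset.range n, ‖x - X i ω‖⁻¹ • (x - X i ω)) -
          ((n:ℝ)⁻¹ • ∑ i ∈ Finset.range n, ‖z - X i ω‖⁻¹ • (z - X i ω))) +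
        ((((n:ℝ)⁻¹ • ∑ i ∈ Finset.range n, ‖z - X i ω‖⁻¹ • (z - X i ω)) - S z) +
          (S z - S x)) := by abel
    rw [e]
    refine (norm_add_le _ _).trans ?_
    have h4 := norm_add_le (((n:ℝ)⁻¹ • ∑ i ∈ Finset.range n,
      ‖z - X i ω‖⁻¹ • (z - X i ω)) - S z) (S z - S x)
    have hring : (4 * C + 3) * δ = 2 * δ * (C + 1) + (δ + 2 * δ * C) := by ring
    linarith
  -- conclude the uniform convergence
  have keyn : ∀ᵐ ω ∂ℙ, ∀ m : ℕ, ∀ᶠ n : ℕ in atTop, ∀ x ∈ K,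
      ‖((n : ℝ)⁻¹ • ∑ i ∈ Finset.range n, ‖x - X i ω‖⁻¹ • (x - X i ω)) - S x‖
        ≤ (4 * C + 3) * (1 / (m + 1)) := by
    rw [ae_all_iff]
    exact fun m => key (1 / (m + 1)) (by positivity)
  filter_upwards [keyn] with ω hω
  have hg0 : ∀ n : ℕ, 0 ≤ ⨆ x ∈ K,
      ‖((n : ℝ)⁻¹ • ∑ i ∈ Finset.range n, ‖x - X i ω‖⁻¹ • (x - X i ω)) - S x‖ :=
    fun n => Real.iSup_nonneg fun x => Real.iSup_nonneg fun _ => norm_nonneg _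
  refine tendsto_order.2 ⟨fun a ha => ?_, fun a ha => ?_⟩
  · exact Filter.Eventually.of_forall fun n => lt_of_lt_of_le ha (hg0 n)
  · obtain ⟨m, hm⟩ := exists_nat_gt ((4 * C + 3) / a)
    have hb : (4 * C + 3) * (1 / (m + 1)) < a := by
      rw [div_lt_iff₀ ha] at hm
      rw [mul_one_div, div_lt_iff₀ (by positivity : (0:ℝ) < (m:ℝ) + 1)]
      nlinarith
    filter_upwards [hω m] with n hn
    refine lt_of_le_of_lt ?_ hb
    have hb0 : 0 ≤ (4 * C + 3) * (1 / (m + 1)) := by positivity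
    exact Real.iSup_le (fun x => Real.iSup_le (fun hx => hn x hx) hb0) hb0
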